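/- arXiv:2501.16839 — 2 statements merged into one kernel-verified Lean document; each statement's English description precedes it below -/
import Mathlib

section
/- Let μ₀, μ₁ ∈ 𝒫₂(ℝ^d), α ∈ Γ(μ₀, μ₁), and let μ_t = (e_t)_# α be the induced curve with induced velocity field v (satisfying v_t μ_t = (e_t)_#[(y-x)α]). Then v is the unique minimizer in L²(ℝ^d, μ_t ×_t Lebesgue_(0,1)) of the flow matching objective u ↦ E_{(t,x,y) ∼ Leb_(0,1) × α}[‖u_t(e_t(x,y)) - (y - x)‖²]. -/
open MeasureTheory

open scoped ENNReal RealInnerProductSpace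

noncomputable def lineInterp {d : ℕ} (t : ℝ)
    (p : EuclideanSpace ℝ (Fin d) × EuclideanSpace ℝ (Fin d)) : EuclideanSpace ℝ (Fin d) :=
  (1 - t) • p.1 + t • p.2

lemma integrable_mul2 {X : Type*} [MeasurableSpace X] {ν : Measure X}
    {a b : X → ℝ} (ha : MemLp a 2 ν) (hb : MemLp b 2 ν) :
    Integrable (fun x => a x * b x) ν := by
  have h : MemLp (a • b) 1 ν := by
    exact MemLp.smul hb ha
  rw [← memLp_one_iff_integrable]
  exact h

lemma abs_integral_mul_le {X : Type*} [MeasurableSpace X] {ν : Measure X}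
    {a b : X → ℝ} (ha : MemLp a 2 ν) (hb : MemLp b 2 ν) :
    |∫ x, a x * b x ∂ν| ≤ (eLpNorm a 2 ν).toReal * (eLpNorm b 2 ν).toReal := by
  have hi := integrable_mul2 ha hb
  have h1 : |∫ x, a x * b x ∂ν| ≤ ∫ x, |a x * b x| ∂ν := by
    simpa [← abs_mul, Real.norm_eq_abs, abs_mul] using
      norm_integral_le_integral_norm (μ := ν) (f := fun x => a x * b x)
  have h2 : ∫ x, |a x * b x| ∂ν = (eLpNorm (a • b) 1 ν).toReal := by
    rw [eLpNorm_one_eq_lintegral_enorm]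
    rw [show (fun x => |a x * b x|) = fun x => ‖(a • b) x‖ by
      funext x; simp [abs_mul, norm_mul]]
    exact integral_norm_eq_lintegral_enorm (ha.1.mul hb.1)
  have h3 : eLpNorm (a • b) 1 ν ≤ eLpNorm a 2 ν * eLpNorm b 2 ν := by
    exact eLpNorm_smul_le_mul_eLpNorm hb.1 ha.1
  calc |∫ x, a x * b x ∂ν| ≤ (eLpNorm (a • b) 1 ν).toReal := h1.trans h2.le
    _ ≤ (eLpNorm a 2 ν * eLpNorm b 2 ν).toReal := by
        refine ENNReal.toReal_mono ?_ h3
        exact ENNReal.mul_ne_top ha.eLpNorm_ne_top hb.eLpNorm_ne_top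
    _ = _ := ENNReal.toReal_mul


lemma integrable_inner2 {X : Type*} [MeasurableSpace X] {ν : Measure X} {n : ℕ}
    {a b : X → EuclideanSpace ℝ (Fin n)} (ha : MemLp a 2 ν) (hb : MemLp b 2 ν) :
    Integrable (fun x => ⟪a x, b x⟫) ν := by
  have hi : Integrable (fun x => ‖a x‖ * ‖b x‖) ν :=
    integrable_mul2 ha.norm hb.norm
  refine hi.mono' (ha.1.inner hb.1) ?_
  filter_upwards with x
  simpa [Real.norm_eq_abs, abs_mul, abs_norm] using abs_real_inner_le_norm (a x) (b x)


/-- Extension of the test-function identity from bounded continuous `f` to `L²` functions `g`. -/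
lemma key_ext {d : ℕ}
    (α : Measure (EuclideanSpace ℝ (Fin d) × EuclideanSpace ℝ (Fin d)))
    [IsProbabilityMeasure α]
    {e : EuclideanSpace ℝ (Fin d) × EuclideanSpace ℝ (Fin d) → EuclideanSpace ℝ (Fin d)}
    (he : Measurable e)
    {V : EuclideanSpace ℝ (Fin d) → ℝ}
    {W : EuclideanSpace ℝ (Fin d) × EuclideanSpace ℝ (Fin d) → ℝ}
    (hV : MemLp V 2 (α.map e)) (hW : MemLp W 2 α)
    (hVW : ∀ f : BoundedContinuousFunction (EuclideanSpace ℝ (Fin d)) ℝ,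
      ∫ x, f x * V x ∂(α.map e) = ∫ p, f (e p) * W p ∂α)
    {g : EuclideanSpace ℝ (Fin d) → ℝ} (hg : MemLp g 2 (α.map e)) :
    ∫ x, g x * V x ∂(α.map e) = ∫ p, g (e p) * W p ∂α := by
  set μ := α.map e with hμ
  haveI : IsProbabilityMeasure μ := Measure.isProbabilityMeasure_map he.aemeasurable
  set C : ℝ := (eLpNorm V 2 μ).toReal + (eLpNorm W 2 α).toReal with hCdef
  have hC : 0 ≤ C := add_nonneg ENNReal.toReal_nonneg ENNReal.toReal_nonneg
  set D : ℝ := ∫ x, g x * V x ∂μ - ∫ p, g (e p) * W p ∂α with hD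
  have hge : MemLp (fun p => g (e p)) 2 α :=
    (memLp_map_measure_iff hg.1 he.aemeasurable).mp hg
  have main : ∀ δ : ℝ, 0 < δ → |D| ≤ δ * C := by
    intro δ hδ
    obtain ⟨f, hf, hfm⟩ := hg.exists_boundedContinuous_eLpNorm_sub_le
      (p := 2) (by norm_num) (ε := ENNReal.ofReal δ)
      (by simp [ENNReal.ofReal_eq_zero, not_le, hδ])
    have hgf2 : MemLp (fun x => g x - f x) 2 μ := hg.sub hfm
    have hgfe2 : MemLp (fun p => g (e p) - f (e p)) 2 α :=
      (memLp_map_measure_iff hgf2.1 he.aemeasurable).mp hgf2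
    have hfe2 : MemLp (fun p => f (e p)) 2 α :=
      (memLp_map_measure_iff hfm.1 he.aemeasurable).mp hfm
    have hnorm1 : (eLpNorm (fun x => g x - f x) 2 μ).toReal ≤ δ := by
      refine ENNReal.toReal_le_of_le_ofReal hδ.le ?_
      exact hf
    have hnorme : eLpNorm (fun p => g (e p) - f (e p)) 2 α
        = eLpNorm (fun x => g x - f x) 2 μ := by
      rw [hμ, eLpNorm_map_measure hgf2.1 he.aemeasurable]
      rfl
    have e1 : |∫ x, g x * V x ∂μ - ∫ x, f x * V x ∂μ| ≤ δ * (eLpNorm V 2 μ).toReal := by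
      rw [← integral_sub (integrable_mul2 hg hV) (integrable_mul2 hfm hV)]
      have : ∀ x, g x * V x - f x * V x = (g x - f x) * V x := fun x => by ring
      simp_rw [this]
      refine (abs_integral_mul_le hgf2 hV).trans ?_
      exact mul_le_mul_of_nonneg_right hnorm1 ENNReal.toReal_nonneg
    have e2 : |∫ p, f (e p) * W p ∂α - ∫ p, g (e p) * W p ∂α|
        ≤ δ * (eLpNorm W 2 α).toReal := by
      rw [← integral_sub (integrable_mul2 hfe2 hW) (integrable_mul2 hge hW)]
      have : ∀ p, f (e p) * W p - g (e p) * W p = -(((g (e p)) - f (e p)) * W p) :=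
        fun p => by ring
      simp_rw [this, integral_neg, abs_neg]
      refine (abs_integral_mul_le hgfe2 hW).trans ?_
      refine mul_le_mul_of_nonneg_right ?_ ENNReal.toReal_nonneg
      rw [hnorme]; exact hnorm1
    calc |D| = |(∫ x, g x * V x ∂μ - ∫ x, f x * V x ∂μ)
          + (∫ p, f (e p) * W p ∂α - ∫ p, g (e p) * W p ∂α)| := by
          rw [hD, hVW f]; ring_nf
      _ ≤ _ + _ := abs_add_le _ _
      _ ≤ δ * (eLpNorm V 2 μ).toReal + δ * (eLpNorm W 2 α).toReal := add_le_add e1 e2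
      _ = δ * C := by rw [hCdef]; ring
  have habs : |D| ≤ 0 := by
    refine le_of_forall_pos_le_add ?_
    intro ε hε
    rcases eq_or_lt_of_le hC with h0 | hpos
    · have := main 1 one_pos
      rw [← h0, mul_zero] at this
      linarith
    · have := main (ε / C) (div_pos hε hpos)
      rw [div_mul_cancel₀ _ (ne_of_gt hpos)] at this
      linarith
  have : D = 0 := abs_nonpos_iff.mp habs
  linarith [sub_eq_zero.mp this]


lemma memℒp_comp_proj {X : Type*} [MeasurableSpace X] {ν : Measure X} {n : ℕ}
    {F : X → EuclideanSpace ℝ (Fin n)} (hF : MemLp F 2 ν) (i : Fin n) :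
    MemLp (fun x => F x i) 2 ν := by
  have h := (EuclideanSpace.proj (𝕜 := ℝ) i).comp_memLp' hF
  refine h.ae_eq ?_
  filter_upwards with x
  simp [Function.comp]

/-- Pointwise (in `t`) Pythagoras identity. -/
lemma pointwise_key {d : ℕ}
    (α : Measure (EuclideanSpace ℝ (Fin d) × EuclideanSpace ℝ (Fin d)))
    [IsProbabilityMeasure α]
    {e : EuclideanSpace ℝ (Fin d) × EuclideanSpace ℝ (Fin d) → EuclideanSpace ℝ (Fin d)}
    (he : Measurable e)
    {U V : EuclideanSpace ℝ (Fin d) → EuclideanSpace ℝ (Fin d)}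
    (hU : MemLp U 2 (α.map e)) (hV : MemLp V 2 (α.map e))
    {W : EuclideanSpace ℝ (Fin d) × EuclideanSpace ℝ (Fin d) → EuclideanSpace ℝ (Fin d)}
    (hW : MemLp W 2 α)
    (hvt : ∀ f : BoundedContinuousFunction (EuclideanSpace ℝ (Fin d)) ℝ,
      ∫ x, f x • V x ∂(α.map e) = ∫ p, f (e p) • W p ∂α) :
    ∫ p, ‖U (e p) - W p‖ ^ 2 ∂α
      = ∫ p, ‖V (e p) - W p‖ ^ 2 ∂α + ∫ x, ‖U x - V x‖ ^ 2 ∂(α.map e) := by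
  set μ := α.map e with hμ
  haveI : IsProbabilityMeasure μ := Measure.isProbabilityMeasure_map he.aemeasurable
  have hUe : MemLp (fun p => U (e p)) 2 α :=
    (memLp_map_measure_iff hU.1 he.aemeasurable).mp hU
  have hVe : MemLp (fun p => V (e p)) 2 α :=
    (memLp_map_measure_iff hV.1 he.aemeasurable).mp hV
  have hG : MemLp (fun x => U x - V x) 2 μ := hU.sub hV
  have hGe : MemLp (fun p => U (e p) - V (e p)) 2 α := by
    have := (memLp_map_measure_iff hG.1 he.aemeasurable).mp hG
    exact this
  -- scalar identity for L² test functions, componentwise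
  have scalar : ∀ (g : EuclideanSpace ℝ (Fin d) → ℝ), MemLp g 2 μ → ∀ i : Fin d,
      ∫ x, g x * V x i ∂μ = ∫ p, g (e p) * W p i ∂α := by
    intro g hg i
    refine key_ext α he (memℒp_comp_proj hV i) (memℒp_comp_proj hW i) ?_ hg
    intro f
    have hftop : MemLp (fun x => f x) ⊤ μ := by
      refine memLp_top_of_bound ?_ ‖f‖
        (Filter.Eventually.of_forall fun x => f.norm_coe_le_norm x)
      exact f.continuous.aestronglyMeasurable
    have hfetop : MemLp (fun p => f (e p)) ⊤ α := by
      refine memLp_top_of_bound ?_ ‖f‖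
        (Filter.Eventually.of_forall fun p => f.norm_coe_le_norm (e p))
      exact f.continuous.comp_aestronglyMeasurable he.aestronglyMeasurable
    have hi1 : Integrable (fun x => f x • V x) μ := by
      rw [← memLp_one_iff_integrable]
      exact MemLp.smul (hV.mono_exponent (p := 1) (by norm_num)) hftop
    have hi2 : Integrable (fun p => f (e p) • W p) α := by
      rw [← memLp_one_iff_integrable]
      exact MemLp.smul (hW.mono_exponent (p := 1) (by norm_num)) hfetop
    have hproj := congrArg (EuclideanSpace.proj (𝕜 := ℝ) i) (hvt f)
    rw [← (EuclideanSpace.proj (𝕜 := ℝ) i).integral_comp_comm hi1,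
        ← (EuclideanSpace.proj (𝕜 := ℝ) i).integral_comp_comm hi2] at hproj
    simpa using hproj
  -- cross term is zero
  have cross : ∫ p, ⟪U (e p) - V (e p), V (e p) - W p⟫ ∂α = 0 := by
    have h1 : ∫ p, ⟪U (e p) - V (e p), V (e p) - W p⟫ ∂α
        = ∫ p, ⟪U (e p) - V (e p), V (e p)⟫ ∂α
          - ∫ p, ⟪U (e p) - V (e p), W p⟫ ∂α := by
      rw [← integral_sub (integrable_inner2 hGe hVe) (integrable_inner2 hGe hW)]
      congr 1; funext p; rw [← inner_sub_right]
    have h2 : ∫ p, ⟪U (e p) - V (e p), V (e p)⟫ ∂α = ∫ x, ⟪U x - V x, V x⟫ ∂μ := by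
      rw [hμ, integral_map he.aemeasurable (hG.1.inner hV.1)]
    have h3 : ∫ x, ⟪U x - V x, V x⟫ ∂μ
        = ∑ i : Fin d, ∫ x, (U x - V x) i * V x i ∂μ := by
      rw [← integral_finset_sum _ (fun i _ =>
        integrable_mul2 (memℒp_comp_proj hG i) (memℒp_comp_proj hV i))]
      congr 1
      funext x; simp [PiLp.inner_apply, mul_comm]
    have h4 : ∫ p, ⟪U (e p) - V (e p), W p⟫ ∂α
        = ∑ i : Fin d, ∫ p, (U (e p) - V (e p)) i * W p i ∂α := by
      rw [← integral_finset_sum _ (fun i _ =>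
        integrable_mul2 (memℒp_comp_proj hGe i) (memℒp_comp_proj hW i))]
      congr 1
      funext x; simp [PiLp.inner_apply, mul_comm]
    rw [h1, h2, h3, h4, sub_eq_zero]
    refine Finset.sum_congr rfl fun i _ => ?_
    have := scalar (fun x => (U x - V x) i) (memℒp_comp_proj hG i) i
    simpa [PiLp.sub_apply] using this
  -- expansion
  have expand : ∀ p, ‖U (e p) - W p‖ ^ 2
      = ‖V (e p) - W p‖ ^ 2 + ‖U (e p) - V (e p)‖ ^ 2
        + 2 * ⟪U (e p) - V (e p), V (e p) - W p⟫ := by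
    intro p
    have hdecomp : U (e p) - W p = (V (e p) - W p) + (U (e p) - V (e p)) := by abel
    rw [hdecomp, norm_add_sq_real, real_inner_comm]
    ring
  have i1 : Integrable (fun p => ‖V (e p) - W p‖ ^ 2) α :=
    (memLp_two_iff_integrable_sq_norm (hVe.sub hW).1).mp (hVe.sub hW)
  have i2 : Integrable (fun p => ‖U (e p) - V (e p)‖ ^ 2) α :=
    (memLp_two_iff_integrable_sq_norm hGe.1).mp hGe
  have i3 : Integrable (fun p => ⟪U (e p) - V (e p), V (e p) - W p⟫) α :=
    integrable_inner2 hGe (hVe.sub hW)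
  have hmap : ∫ x, ‖U x - V x‖ ^ 2 ∂μ = ∫ p, ‖U (e p) - V (e p)‖ ^ 2 ∂α := by
    rw [hμ, integral_map he.aemeasurable]
    exact ((continuous_pow 2).comp_aestronglyMeasurable hG.1.norm)
  calc ∫ p, ‖U (e p) - W p‖ ^ 2 ∂α
      = ∫ p, (‖V (e p) - W p‖ ^ 2 + ‖U (e p) - V (e p)‖ ^ 2
          + 2 * ⟪U (e p) - V (e p), V (e p) - W p⟫) ∂α := by
        congr 1; funext p; exact expand p
    _ = ∫ p, ‖V (e p) - W p‖ ^ 2 ∂α + ∫ p, ‖U (e p) - V (e p)‖ ^ 2 ∂α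
          + 2 * ∫ p, ⟪U (e p) - V (e p), V (e p) - W p⟫ ∂α := by
        have i12 : Integrable
            (fun p => ‖V (e p) - W p‖ ^ 2 + ‖U (e p) - V (e p)‖ ^ 2) α := i1.add i2
        rw [integral_add i12 (i3.const_mul 2), integral_add i1 i2, integral_const_mul]
    _ = ∫ p, ‖V (e p) - W p‖ ^ 2 ∂α + ∫ x, ‖U x - V x‖ ^ 2 ∂μ := by
        rw [cross, hmap]; ring


/-- The velocity field induced by a coupling `α` is the unique minimizer of the flow matching
objective `u ↦ ∫₀¹ ∫ ‖u_t(e_t(x,y)) - (y-x)‖² dα dt` over `L²(μ_t ×_t dt)`. -/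
theorem stmt8 {d : ℕ} (μ₀ μ₁ : Measure (EuclideanSpace ℝ (Fin d)))
    [IsProbabilityMeasure μ₀] [IsProbabilityMeasure μ₁]
    (hmom₀ : Integrable (fun x => ‖x‖ ^ 2) μ₀) (hmom₁ : Integrable (fun x => ‖x‖ ^ 2) μ₁)
    (α : Measure (EuclideanSpace ℝ (Fin d) × EuclideanSpace ℝ (Fin d)))
    [IsProbabilityMeasure α]
    (hα₁ : α.map Prod.fst = μ₀) (hα₂ : α.map Prod.snd = μ₁)
    (v : ℝ → EuclideanSpace ℝ (Fin d) → EuclideanSpace ℝ (Fin d))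
    (hvm : Measurable fun q : ℝ × EuclideanSpace ℝ (Fin d) => v q.1 q.2)
    (hvL2 : ∫⁻ t in Set.Ioo (0 : ℝ) 1,
        ∫⁻ x, ENNReal.ofReal (‖v t x‖ ^ 2) ∂(α.map (lineInterp t)) ≠ ⊤)
    (hv : ∀ᵐ t ∂(volume.restrict (Set.Ioo (0 : ℝ) 1)),
      ∀ f : BoundedContinuousFunction (EuclideanSpace ℝ (Fin d)) ℝ,
        ∫ x, f x • v t x ∂(α.map (lineInterp t))
          = ∫ p, f (lineInterp t p) • (p.2 - p.1) ∂α) :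
    ∀ u : ℝ → EuclideanSpace ℝ (Fin d) → EuclideanSpace ℝ (Fin d),
      Measurable (fun q : ℝ × EuclideanSpace ℝ (Fin d) => u q.1 q.2) →
      (∫⁻ t in Set.Ioo (0 : ℝ) 1,
        ∫⁻ x, ENNReal.ofReal (‖u t x‖ ^ 2) ∂(α.map (lineInterp t)) ≠ ⊤) →
      (∫ t in Set.Ioo (0 : ℝ) 1, ∫ p, ‖v t (lineInterp t p) - (p.2 - p.1)‖ ^ 2 ∂α
          ≤ ∫ t in Set.Ioo (0 : ℝ) 1, ∫ p, ‖u t (lineInterp t p) - (p.2 - p.1)‖ ^ 2 ∂α) ∧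
      (∫ t in Set.Ioo (0 : ℝ) 1, ∫ p, ‖u t (lineInterp t p) - (p.2 - p.1)‖ ^ 2 ∂α
          = ∫ t in Set.Ioo (0 : ℝ) 1, ∫ p, ‖v t (lineInterp t p) - (p.2 - p.1)‖ ^ 2 ∂α →
        ∫ t in Set.Ioo (0 : ℝ) 1, ∫ x, ‖u t x - v t x‖ ^ 2 ∂(α.map (lineInterp t)) = 0) := by
  intro u hum huL2
  -- basic measurability
  have hle : ∀ t : ℝ, Measurable (lineInterp (d := d) t) := fun t => by
    unfold lineInterp; fun_prop
  have hlj : Measurable (fun q : ℝ × (EuclideanSpace ℝ (Fin d) × EuclideanSpace ℝ (Fin d)) =>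
      lineInterp q.1 q.2) := by
    unfold lineInterp; fun_prop
  have humt : ∀ t, Measurable (u t) := fun t => hum.comp measurable_prodMk_left
  have hvmt : ∀ t, Measurable (v t) := fun t => hvm.comp measurable_prodMk_left
  have hprob : ∀ t : ℝ, IsProbabilityMeasure (α.map (lineInterp t)) :=
    fun t => Measure.isProbabilityMeasure_map (hle t).aemeasurable
  -- second moment of the coupling
  have hw2 : MemLp (fun p : EuclideanSpace ℝ (Fin d) × EuclideanSpace ℝ (Fin d) =>
      p.2 - p.1) 2 α := by
    have h0 : MemLp (id : EuclideanSpace ℝ (Fin d) → EuclideanSpace ℝ (Fin d)) 2 μ₀ :=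
      (memLp_two_iff_integrable_sq_norm aestronglyMeasurable_id).mpr hmom₀
    have h1 : MemLp (id : EuclideanSpace ℝ (Fin d) → EuclideanSpace ℝ (Fin d)) 2 μ₁ :=
      (memLp_two_iff_integrable_sq_norm aestronglyMeasurable_id).mpr hmom₁
    rw [← hα₁] at h0; rw [← hα₂] at h1
    have h0' : MemLp (fun p : EuclideanSpace ℝ (Fin d) × EuclideanSpace ℝ (Fin d) => p.1) 2 α :=
      (memLp_map_measure_iff aestronglyMeasurable_id measurable_fst.aemeasurable).mp h0
    have h1' : MemLp (fun p : EuclideanSpace ℝ (Fin d) × EuclideanSpace ℝ (Fin d) => p.2) 2 α :=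
      (memLp_map_measure_iff aestronglyMeasurable_id measurable_snd.aemeasurable).mp h1
    exact h1'.sub h0'
  -- lintegral quantities
  set JW : ℝ≥0∞ := ∫⁻ p, ENNReal.ofReal (‖p.2 - p.1‖ ^ 2) ∂α with hJWdef
  have hJW : JW ≠ ⊤ := by
    have hi := (memLp_two_iff_integrable_sq_norm hw2.1).mp hw2
    have := hi.2
    rw [hasFiniteIntegral_iff_ofReal (Filter.Eventually.of_forall fun p => by positivity)] at this
    exact this.ne
  set Ju : ℝ → ℝ≥0∞ := fun t => ∫⁻ p, ENNReal.ofReal (‖u t (lineInterp t p)‖ ^ 2) ∂α with hJudef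
  set Jv : ℝ → ℝ≥0∞ := fun t => ∫⁻ p, ENNReal.ofReal (‖v t (lineInterp t p)‖ ^ 2) ∂α with hJvdef
  have hJu_meas : Measurable Ju := by
    refine Measurable.lintegral_prod_right' (f := fun q => ENNReal.ofReal
      (‖u q.1 (lineInterp q.1 q.2)‖ ^ 2)) ?_
    exact ((hum.comp (measurable_fst.prodMk hlj)).norm.pow_const 2).ennreal_ofReal
  have hJv_meas : Measurable Jv := by
    refine Measurable.lintegral_prod_right' (f := fun q => ENNReal.ofReal
      (‖v q.1 (lineInterp q.1 q.2)‖ ^ 2)) ?_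
    exact ((hvm.comp (measurable_fst.prodMk hlj)).norm.pow_const 2).ennreal_ofReal
  have huL2' : ∫⁻ t in Set.Ioo (0 : ℝ) 1, Ju t ≠ ⊤ := by
    rw [← lintegral_congr (fun t => lintegral_map
      (((humt t).norm.pow_const 2).ennreal_ofReal) (hle t))]
    exact huL2
  have hvL2' : ∫⁻ t in Set.Ioo (0 : ℝ) 1, Jv t ≠ ⊤ := by
    rw [← lintegral_congr (fun t => lintegral_map
      (((hvmt t).norm.pow_const 2).ennreal_ofReal) (hle t))]
    exact hvL2
  have haeJu : ∀ᵐ t ∂(volume.restrict (Set.Ioo (0 : ℝ) 1)), Ju t < ⊤ :=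
    ae_lt_top hJu_meas huL2'
  have haeJv : ∀ᵐ t ∂(volume.restrict (Set.Ioo (0 : ℝ) 1)), Jv t < ⊤ :=
    ae_lt_top hJv_meas hvL2'
  -- square bound
  have sqb : ∀ a b : EuclideanSpace ℝ (Fin d), ENNReal.ofReal (‖a - b‖ ^ 2)
      ≤ 2 * ENNReal.ofReal (‖a‖ ^ 2) + 2 * ENNReal.ofReal (‖b‖ ^ 2) := by
    intro a b
    have h : ‖a - b‖ ^ 2 ≤ 2 * ‖a‖ ^ 2 + 2 * ‖b‖ ^ 2 := by
      nlinarith [norm_sub_le a b, norm_nonneg a, norm_nonneg b, sq_nonneg (‖a‖ - ‖b‖),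
        norm_nonneg (a - b)]
    calc ENNReal.ofReal (‖a - b‖ ^ 2) ≤ ENNReal.ofReal (2 * ‖a‖ ^ 2 + 2 * ‖b‖ ^ 2) :=
          ENNReal.ofReal_le_ofReal h
      _ = 2 * ENNReal.ofReal (‖a‖ ^ 2) + 2 * ENNReal.ofReal (‖b‖ ^ 2) := by
          rw [ENNReal.ofReal_add (by positivity) (by positivity),
            ENNReal.ofReal_mul (by norm_num), ENNReal.ofReal_mul (by norm_num),
            ENNReal.ofReal_ofNat]
  -- the three lintegral-in-t functions
  set LA : ℝ → ℝ≥0∞ := fun t =>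
    ∫⁻ p, ENNReal.ofReal (‖u t (lineInterp t p) - (p.2 - p.1)‖ ^ 2) ∂α with hLAdef
  set LB : ℝ → ℝ≥0∞ := fun t =>
    ∫⁻ p, ENNReal.ofReal (‖v t (lineInterp t p) - (p.2 - p.1)‖ ^ 2) ∂α with hLBdef
  have hLA_meas : Measurable LA := by
    refine Measurable.lintegral_prod_right' (f := fun q => ENNReal.ofReal
      (‖u q.1 (lineInterp q.1 q.2) - (q.2.2 - q.2.1)‖ ^ 2)) ?_
    exact (((hum.comp (measurable_fst.prodMk hlj)).sub
      ((measurable_snd.snd).sub (measurable_snd.fst))).norm.pow_const 2).ennreal_ofReal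
  have hLB_meas : Measurable LB := by
    refine Measurable.lintegral_prod_right' (f := fun q => ENNReal.ofReal
      (‖v q.1 (lineInterp q.1 q.2) - (q.2.2 - q.2.1)‖ ^ 2)) ?_
    exact (((hvm.comp (measurable_fst.prodMk hlj)).sub
      ((measurable_snd.snd).sub (measurable_snd.fst))).norm.pow_const 2).ennreal_ofReal
  have hwmeas : Measurable (fun p : EuclideanSpace ℝ (Fin d) × EuclideanSpace ℝ (Fin d) =>
      p.2 - p.1) := measurable_snd.sub measurable_fst
  have hLA_le : ∀ t, LA t ≤ 2 * Ju t + 2 * JW := by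
    intro t
    calc LA t ≤ ∫⁻ p, (2 * ENNReal.ofReal (‖u t (lineInterp t p)‖ ^ 2)
          + 2 * ENNReal.ofReal (‖p.2 - p.1‖ ^ 2)) ∂α := lintegral_mono fun p => sqb _ _
      _ = 2 * Ju t + 2 * JW := by
          have hm1 : Measurable fun p : EuclideanSpace ℝ (Fin d) × EuclideanSpace ℝ (Fin d) =>
              ENNReal.ofReal (‖u t (lineInterp t p)‖ ^ 2) :=
            (((humt t).comp (hle t)).norm.pow_const 2).ennreal_ofReal
          have hm2 : Measurable fun p : EuclideanSpace ℝ (Fin d) × EuclideanSpace ℝ (Fin d) =>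
              ENNReal.ofReal (‖p.2 - p.1‖ ^ 2) := (hwmeas.norm.pow_const 2).ennreal_ofReal
          rw [lintegral_add_left (hm1.const_mul 2), lintegral_const_mul 2 hm1,
            lintegral_const_mul 2 hm2]
  have hLB_le : ∀ t, LB t ≤ 2 * Jv t + 2 * JW := by
    intro t
    calc LB t ≤ ∫⁻ p, (2 * ENNReal.ofReal (‖v t (lineInterp t p)‖ ^ 2)
          + 2 * ENNReal.ofReal (‖p.2 - p.1‖ ^ 2)) ∂α := lintegral_mono fun p => sqb _ _
      _ = 2 * Jv t + 2 * JW := by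
          have hm1 : Measurable fun p : EuclideanSpace ℝ (Fin d) × EuclideanSpace ℝ (Fin d) =>
              ENNReal.ofReal (‖v t (lineInterp t p)‖ ^ 2) :=
            (((hvmt t).comp (hle t)).norm.pow_const 2).ennreal_ofReal
          have hm2 : Measurable fun p : EuclideanSpace ℝ (Fin d) × EuclideanSpace ℝ (Fin d) =>
              ENNReal.ofReal (‖p.2 - p.1‖ ^ 2) := (hwmeas.norm.pow_const 2).ennreal_ofReal
          rw [lintegral_add_left (hm1.const_mul 2), lintegral_const_mul 2 hm1,
            lintegral_const_mul 2 hm2]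
  have hvol : (volume.restrict (Set.Ioo (0 : ℝ) 1)) Set.univ = 1 := by
    rw [Measure.restrict_apply_univ, Real.volume_Ioo]
    norm_num
  have hbound_fin : ∀ (J : ℝ → ℝ≥0∞), Measurable J →
      (∫⁻ t in Set.Ioo (0 : ℝ) 1, J t) ≠ ⊤ →
      ∫⁻ t in Set.Ioo (0 : ℝ) 1, (2 * J t + 2 * JW) ≠ ⊤ := by
    intro J hJm hJfin
    rw [lintegral_add_left (hJm.const_mul 2), lintegral_const_mul 2 hJm, lintegral_const, hvol,
      mul_one]
    exact ENNReal.add_ne_top.mpr ⟨ENNReal.mul_ne_top (by norm_num) hJfin,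
      ENNReal.mul_ne_top (by norm_num) hJW⟩
  have hLAfin : ∫⁻ t in Set.Ioo (0 : ℝ) 1, LA t ≠ ⊤ :=
    ne_top_of_le_ne_top (hbound_fin Ju hJu_meas huL2') (lintegral_mono hLA_le)
  have hLBfin : ∫⁻ t in Set.Ioo (0 : ℝ) 1, LB t ≠ ⊤ :=
    ne_top_of_le_ne_top (hbound_fin Jv hJv_meas hvL2') (lintegral_mono hLB_le)
  -- Bochner integrals equal toReal of lintegrals
  have hA_eq : ∀ t : ℝ, (∫ p, ‖u t (lineInterp t p) - (p.2 - p.1)‖ ^ 2 ∂α) = (LA t).toReal := by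
    intro t
    have hm0 : Measurable fun p : EuclideanSpace ℝ (Fin d) × EuclideanSpace ℝ (Fin d) =>
        ‖u t (lineInterp t p) - (p.2 - p.1)‖ ^ 2 :=
      (((((humt t).comp (hle t))).sub hwmeas).norm.pow_const 2)
    rw [integral_eq_lintegral_of_nonneg_ae
      (Filter.Eventually.of_forall fun p => by positivity) hm0.aestronglyMeasurable]
  have hB_eq : ∀ t : ℝ, (∫ p, ‖v t (lineInterp t p) - (p.2 - p.1)‖ ^ 2 ∂α) = (LB t).toReal := by
    intro t
    have hm0 : Measurable fun p : EuclideanSpace ℝ (Fin d) × EuclideanSpace ℝ (Fin d) =>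
        ‖v t (lineInterp t p) - (p.2 - p.1)‖ ^ 2 :=
      (((((hvmt t).comp (hle t))).sub hwmeas).norm.pow_const 2)
    rw [integral_eq_lintegral_of_nonneg_ae
      (Filter.Eventually.of_forall fun p => by positivity) hm0.aestronglyMeasurable]
  have hA_int : IntegrableOn (fun t => ∫ p, ‖u t (lineInterp t p) - (p.2 - p.1)‖ ^ 2 ∂α)
      (Set.Ioo (0 : ℝ) 1) volume := by
    rw [show (fun t => ∫ p, ‖u t (lineInterp t p) - (p.2 - p.1)‖ ^ 2 ∂α)
        = fun t => (LA t).toReal from funext hA_eq]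
    exact integrable_toReal_of_lintegral_ne_top hLA_meas.aemeasurable.restrict hLAfin
  have hB_int : IntegrableOn (fun t => ∫ p, ‖v t (lineInterp t p) - (p.2 - p.1)‖ ^ 2 ∂α)
      (Set.Ioo (0 : ℝ) 1) volume := by
    rw [show (fun t => ∫ p, ‖v t (lineInterp t p) - (p.2 - p.1)‖ ^ 2 ∂α)
        = fun t => (LB t).toReal from funext hB_eq]
    exact integrable_toReal_of_lintegral_ne_top hLB_meas.aemeasurable.restrict hLBfin
  -- a.e. Pythagoras identity
  have hkey : ∀ᵐ t ∂(volume.restrict (Set.Ioo (0 : ℝ) 1)),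
      (∫ p, ‖u t (lineInterp t p) - (p.2 - p.1)‖ ^ 2 ∂α)
        = (∫ p, ‖v t (lineInterp t p) - (p.2 - p.1)‖ ^ 2 ∂α)
          + ∫ x, ‖u t x - v t x‖ ^ 2 ∂(α.map (lineInterp t)) := by
    filter_upwards [hv, haeJu, haeJv] with t hvt hJut hJvt
    haveI := hprob t
    have hu2 : MemLp (u t) 2 (α.map (lineInterp t)) := by
      rw [memLp_two_iff_integrable_sq_norm (humt t).aestronglyMeasurable]
      refine ⟨((humt t).norm.pow_const 2).aestronglyMeasurable, ?_⟩
      rw [hasFiniteIntegral_iff_ofReal (Filter.Eventually.of_forall fun x => by positivity),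
        lintegral_map (((humt t).norm.pow_const 2).ennreal_ofReal) (hle t)]
      exact hJut
    have hv2 : MemLp (v t) 2 (α.map (lineInterp t)) := by
      rw [memLp_two_iff_integrable_sq_norm (hvmt t).aestronglyMeasurable]
      refine ⟨((hvmt t).norm.pow_const 2).aestronglyMeasurable, ?_⟩
      rw [hasFiniteIntegral_iff_ofReal (Filter.Eventually.of_forall fun x => by positivity),
        lintegral_map (((hvmt t).norm.pow_const 2).ennreal_ofReal) (hle t)]
      exact hJvt
    exact pointwise_key α (hle t) hu2 hv2 hw2 hvt
  constructor
  · refine integral_mono_ae hB_int hA_int ?_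
    filter_upwards [hkey] with t ht
    have hnn : 0 ≤ ∫ x, ‖u t x - v t x‖ ^ 2 ∂(α.map (lineInterp t)) :=
      integral_nonneg fun x => by positivity
    linarith
  · intro hEq
    have hC_ae : (fun t => ∫ x, ‖u t x - v t x‖ ^ 2 ∂(α.map (lineInterp t)))
        =ᵐ[volume.restrict (Set.Ioo (0 : ℝ) 1)]
        fun t => (∫ p, ‖u t (lineInterp t p) - (p.2 - p.1)‖ ^ 2 ∂α)
          - (∫ p, ‖v t (lineInterp t p) - (p.2 - p.1)‖ ^ 2 ∂α) := by
      filter_upwards [hkey] with t ht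
      linarith
    rw [integral_congr_ae hC_ae, integral_sub hA_int hB_int, hEq, sub_self]
end

section
/- Let η ∈ 𝒫₂(ℝ^m), μ₀, μ₁ ∈ 𝒫_η(ℝ^m × ℝ^d), and for β > 0 let W_β(μ₀,μ₁)² = min over α ∈ Γ(μ₀,μ₁) of ∫ (‖x₁-x₂‖² + β‖w₁-w₂‖²) dα. If (α_β)_β are optimal plans for W_β(μ₀, μ₁), then ∫ ‖w₁ - w₂‖² dα_β → 0 as β → ∞. -/
open MeasureTheory

/-- The set of couplings of two measures. -/
def couplings {E : Type*} [MeasurableSpace E] (μ ν : Measure E) : Set (Measure (E × E)) :=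
  {α | IsProbabilityMeasure α ∧ α.map Prod.fst = μ ∧ α.map Prod.snd = ν}

open ProbabilityTheory

/-- Abbreviation for the product space. -/
abbrev PSp (m d : ℕ) := EuclideanSpace ℝ (Fin m) × EuclideanSpace ℝ (Fin d)

instance (m d : ℕ) : OpensMeasurableSpace (PSp m d × PSp m d) := Prod.opensMeasurableSpace

instance (m d : ℕ) : OpensMeasurableSpace
    (EuclideanSpace ℝ (Fin m) × EuclideanSpace ℝ (Fin d) × EuclideanSpace ℝ (Fin d)) :=
  Prod.opensMeasurableSpace

lemma aux_norm_sub_sq {E : Type*} [NormedAddCommGroup E] (a b : E) :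
    ‖a - b‖ ^ 2 ≤ 2 * ‖a‖ ^ 2 + 2 * ‖b‖ ^ 2 := by
  have h := norm_sub_le a b
  nlinarith [norm_nonneg a, norm_nonneg b, norm_nonneg (a - b), sq_nonneg (‖a‖ - ‖b‖)]

lemma aux_map_fst {α β γ : Type*} [MeasurableSpace α] [MeasurableSpace β] [MeasurableSpace γ]
    (μ : Measure α) [SFinite μ] (κ : Kernel α β) (κ' : Kernel α γ)
    [IsMarkovKernel κ] [IsMarkovKernel κ'] :
    (μ ⊗ₘ (κ ×ₖ κ')).map (fun q => (q.1, q.2.1)) = μ ⊗ₘ κ := by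
  have hm : Measurable fun q : α × β × γ => (q.1, q.2.1) :=
    measurable_fst.prodMk measurable_snd.fst
  ext s hs
  rw [Measure.map_apply hm hs, Measure.compProd_apply (hm hs), Measure.compProd_apply hs]
  refine lintegral_congr fun a => ?_
  have h1 : (Prod.mk a ⁻¹' ((fun q : α × β × γ => (q.1, q.2.1)) ⁻¹' s))
      = Prod.fst ⁻¹' (Prod.mk a ⁻¹' s) := rfl
  rw [h1, Kernel.prod_apply, ← Measure.fst_apply (measurable_prodMk_left hs),
    Measure.fst_prod]

lemma aux_map_snd {α β γ : Type*} [MeasurableSpace α] [MeasurableSpace β] [MeasurableSpace γ]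
    (μ : Measure α) [SFinite μ] (κ : Kernel α β) (κ' : Kernel α γ)
    [IsMarkovKernel κ] [IsMarkovKernel κ'] :
    (μ ⊗ₘ (κ ×ₖ κ')).map (fun q => (q.1, q.2.2)) = μ ⊗ₘ κ' := by
  have hm : Measurable fun q : α × β × γ => (q.1, q.2.2) :=
    measurable_fst.prodMk measurable_snd.snd
  ext s hs
  rw [Measure.map_apply hm hs, Measure.compProd_apply (hm hs), Measure.compProd_apply hs]
  refine lintegral_congr fun a => ?_
  have h1 : (Prod.mk a ⁻¹' ((fun q : α × β × γ => (q.1, q.2.2)) ⁻¹' s))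
      = Prod.snd ⁻¹' (Prod.mk a ⁻¹' s) := rfl
  rw [h1, Kernel.prod_apply, ← Measure.snd_apply (measurable_prodMk_left hs),
    Measure.snd_prod]

/-- For optimal plans `α_β` of the weighted cost `‖x₁-x₂‖² + β‖w₁-w₂‖²` between two measures
with common first marginal `η`, the `w`-transport cost `∫ ‖w₁-w₂‖² dα_β` tends to `0` as
`β → ∞`. -/
theorem stmt15 {m d : ℕ} (η : Measure (EuclideanSpace ℝ (Fin m))) [IsProbabilityMeasure η]
    (hη : Integrable (fun w => ‖w‖ ^ 2) η)
    (μ₀ μ₁ : Measure (EuclideanSpace ℝ (Fin m) × EuclideanSpace ℝ (Fin d)))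
    [IsProbabilityMeasure μ₀] [IsProbabilityMeasure μ₁]
    (hμ₀2 : Integrable (fun p => ‖p.1‖ ^ 2 + ‖p.2‖ ^ 2) μ₀)
    (hμ₁2 : Integrable (fun p => ‖p.1‖ ^ 2 + ‖p.2‖ ^ 2) μ₁)
    (hμ₀m : μ₀.map Prod.fst = η) (hμ₁m : μ₁.map Prod.fst = η)
    (α : ℝ → Measure ((EuclideanSpace ℝ (Fin m) × EuclideanSpace ℝ (Fin d)) ×
      (EuclideanSpace ℝ (Fin m) × EuclideanSpace ℝ (Fin d))))
    (hcoup : ∀ β > (0 : ℝ), α β ∈ couplings μ₀ μ₁)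
    (hopt : ∀ β > (0 : ℝ),
      ∫ p, (‖p.1.2 - p.2.2‖ ^ 2 + β * ‖p.1.1 - p.2.1‖ ^ 2) ∂(α β)
        = sInf ((fun γ => ∫ p, (‖p.1.2 - p.2.2‖ ^ 2 + β * ‖p.1.1 - p.2.1‖ ^ 2) ∂γ) ''
            couplings μ₀ μ₁)) :
    Filter.Tendsto (fun β => ∫ p, ‖p.1.1 - p.2.1‖ ^ 2 ∂(α β)) Filter.atTop (nhds 0) := by
  classical
  have hμ₀fst : μ₀.fst = η := hμ₀m
  have hμ₁fst : μ₁.fst = η := hμ₁m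
  set κ₀ := μ₀.condKernel with hκ₀
  set κ₁ := μ₁.condKernel with hκ₁
  set ν0 : Measure (EuclideanSpace ℝ (Fin m) × EuclideanSpace ℝ (Fin d) × EuclideanSpace ℝ (Fin d)) := η ⊗ₘ (κ₀ ×ₖ κ₁) with hν0
  set F : EuclideanSpace ℝ (Fin m) × EuclideanSpace ℝ (Fin d) × EuclideanSpace ℝ (Fin d) → PSp m d × PSp m d := fun q => ((q.1, q.2.1), (q.1, q.2.2)) with hFdef
  have hF : Measurable F := by fun_prop
  set γ : Measure (PSp m d × PSp m d) := ν0.map F with hγdef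
  haveI : IsProbabilityMeasure γ := Measure.isProbabilityMeasure_map hF.aemeasurable
  have hγ1 : γ.map Prod.fst = μ₀ := by
    rw [hγdef, Measure.map_map measurable_fst hF]
    have h1 : (Prod.fst ∘ F : EuclideanSpace ℝ (Fin m) × EuclideanSpace ℝ (Fin d) × EuclideanSpace ℝ (Fin d) → PSp m d) = fun q => (q.1, q.2.1) := rfl
    rw [h1, hν0, aux_map_fst, ← hμ₀fst, hκ₀, μ₀.disintegrate μ₀.condKernel]
  have hγ2 : γ.map Prod.snd = μ₁ := by
    rw [hγdef, Measure.map_map measurable_snd hF]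
    have h1 : (Prod.snd ∘ F : EuclideanSpace ℝ (Fin m) × EuclideanSpace ℝ (Fin d) × EuclideanSpace ℝ (Fin d) → PSp m d) = fun q => (q.1, q.2.2) := rfl
    rw [h1, hν0, aux_map_snd, ← hμ₁fst, hκ₁, μ₁.disintegrate μ₁.condKernel]
  have hγcoup : γ ∈ couplings μ₀ μ₁ := ⟨inferInstance, hγ1, hγ2⟩
  set C := ∫ q, ‖q.2.1 - q.2.2‖ ^ 2 ∂ν0 with hC
  have hγcost : ∀ β : ℝ,
      ∫ p, (‖p.1.2 - p.2.2‖ ^ 2 + β * ‖p.1.1 - p.2.1‖ ^ 2) ∂γ = C := by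
    intro β
    have hcont : Continuous fun p : PSp m d × PSp m d =>
        ‖p.1.2 - p.2.2‖ ^ 2 + β * ‖p.1.1 - p.2.1‖ ^ 2 := by fun_prop
    rw [hγdef, integral_map hF.aemeasurable hcont.aestronglyMeasurable]
    simp [hFdef, hC]
  have key : ∀ β : ℝ, 0 < β →
      0 ≤ ∫ p, ‖p.1.1 - p.2.1‖ ^ 2 ∂(α β) ∧
      ∫ p, ‖p.1.1 - p.2.1‖ ^ 2 ∂(α β) ≤ C / β := by
    intro β hβ
    obtain ⟨hprob, h1, h2⟩ := hcoup β hβ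
    haveI := hprob
    refine ⟨integral_nonneg fun p => by positivity, ?_⟩
    have hsm : Continuous fun p : PSp m d => ‖p.1‖ ^ 2 + ‖p.2‖ ^ 2 := by fun_prop
    have hint0 : Integrable (fun p : PSp m d × PSp m d => ‖p.1.1‖ ^ 2 + ‖p.1.2‖ ^ 2) (α β) := by
      have := (integrable_map_measure (h1 ▸ hsm.aestronglyMeasurable)
        measurable_fst.aemeasurable).mp (h1 ▸ hμ₀2)
      exact this
    have hint1 : Integrable (fun p : PSp m d × PSp m d => ‖p.2.1‖ ^ 2 + ‖p.2.2‖ ^ 2) (α β) := by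
      have := (integrable_map_measure (h2 ▸ hsm.aestronglyMeasurable)
        measurable_snd.aemeasurable).mp (h2 ▸ hμ₁2)
      exact this
    have hdom : Integrable (fun p : PSp m d × PSp m d => (2 + 2 * β) *
        ((‖p.1.1‖ ^ 2 + ‖p.1.2‖ ^ 2) + (‖p.2.1‖ ^ 2 + ‖p.2.2‖ ^ 2))) (α β) :=
      (hint0.add hint1).const_mul _
    have hbound : ∀ p : PSp m d × PSp m d,
        ‖p.1.2 - p.2.2‖ ^ 2 + β * ‖p.1.1 - p.2.1‖ ^ 2 ≤ (2 + 2 * β) *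
        ((‖p.1.1‖ ^ 2 + ‖p.1.2‖ ^ 2) + (‖p.2.1‖ ^ 2 + ‖p.2.2‖ ^ 2)) := by
      intro p
      have hx := aux_norm_sub_sq p.1.2 p.2.2
      have hw := aux_norm_sub_sq p.1.1 p.2.1
      nlinarith [sq_nonneg ‖p.1.1‖, sq_nonneg ‖p.1.2‖, sq_nonneg ‖p.2.1‖,
        sq_nonneg ‖p.2.2‖, sq_nonneg ‖p.1.1 - p.2.1‖, sq_nonneg ‖p.1.2 - p.2.2‖,
        mul_le_mul_of_nonneg_left hw hβ.le]
    have hcontc : Continuous fun p : PSp m d × PSp m d =>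
        ‖p.1.2 - p.2.2‖ ^ 2 + β * ‖p.1.1 - p.2.1‖ ^ 2 := by fun_prop
    have hcost_int : Integrable (fun p : PSp m d × PSp m d =>
        ‖p.1.2 - p.2.2‖ ^ 2 + β * ‖p.1.1 - p.2.1‖ ^ 2) (α β) := by
      refine hdom.mono' hcontc.aestronglyMeasurable (Filter.Eventually.of_forall fun p => ?_)
      rw [Real.norm_eq_abs, abs_of_nonneg (by positivity)]
      exact hbound p
    have hw_int : Integrable (fun p : PSp m d × PSp m d => β * ‖p.1.1 - p.2.1‖ ^ 2) (α β) := by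
      have hcw : Continuous fun p : PSp m d × PSp m d => β * ‖p.1.1 - p.2.1‖ ^ 2 := by
        fun_prop
      refine hdom.mono' hcw.aestronglyMeasurable (Filter.Eventually.of_forall fun p => ?_)
      rw [Real.norm_eq_abs, abs_of_nonneg (by positivity)]
      calc β * ‖p.1.1 - p.2.1‖ ^ 2
          ≤ ‖p.1.2 - p.2.2‖ ^ 2 + β * ‖p.1.1 - p.2.1‖ ^ 2 :=
            le_add_of_nonneg_left (by positivity)
        _ ≤ _ := hbound p
    have hstep : β * ∫ p, ‖p.1.1 - p.2.1‖ ^ 2 ∂(α β)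
        ≤ ∫ p, (‖p.1.2 - p.2.2‖ ^ 2 + β * ‖p.1.1 - p.2.1‖ ^ 2) ∂(α β) := by
      rw [← integral_const_mul]
      exact integral_mono hw_int hcost_int fun p =>
        le_add_of_nonneg_left (by positivity)
    have hbddS : BddBelow ((fun γ => ∫ p,
        (‖p.1.2 - p.2.2‖ ^ 2 + β * ‖p.1.1 - p.2.1‖ ^ 2) ∂γ) '' couplings μ₀ μ₁) := by
      refine ⟨0, fun y hy => ?_⟩
      obtain ⟨γ', _, rfl⟩ := hy
      exact integral_nonneg fun p => by positivity
    have hsInf : sInf ((fun γ => ∫ p,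
        (‖p.1.2 - p.2.2‖ ^ 2 + β * ‖p.1.1 - p.2.1‖ ^ 2) ∂γ) '' couplings μ₀ μ₁) ≤ C :=
      csInf_le hbddS ⟨γ, hγcoup, hγcost β⟩
    have hfin : β * ∫ p, ‖p.1.1 - p.2.1‖ ^ 2 ∂(α β) ≤ C := by
      calc β * ∫ p, ‖p.1.1 - p.2.1‖ ^ 2 ∂(α β) ≤ _ := hstep
        _ = _ := hopt β hβ
        _ ≤ C := hsInf
    rw [le_div_iff₀ hβ]
    linarith
  have h0 : Filter.Tendsto (fun β : ℝ => C / β) Filter.atTop (nhds 0) :=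
    Filter.Tendsto.div_atTop tendsto_const_nhds Filter.tendsto_id
  refine tendsto_of_tendsto_of_tendsto_of_le_of_le' tendsto_const_nhds h0 ?_ ?_
  · filter_upwards [Filter.eventually_gt_atTop 0] with β hβ
    exact (key β hβ).1
  · filter_upwards [Filter.eventually_gt_atTop 0] with β hβ
    exact (key β hβ).2
end
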